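/- For a connected graph G with m edges and p ≥ 1, A_p(G) ≥ (m + p·Alb(G))^(1/p) − m^(1/p). -/

import Mathlib

open Finset

/-- The general Albertson irregularity index. -/
noncomputable def Ap {V : Type*} [Fintype V] (G : SimpleGraph V) [DecidableRel G.Adj]
    (p : ℝ) : ℝ :=
  ((∑ u : V, ∑ v ∈ G.neighborFinset u,
      |(G.degree u : ℝ) - (G.degree v : ℝ)| ^ p) / 2) ^ (1 / p)

/-- The Albertson irregularity index `Alb(G) = A_1(G)`. -/
noncomputable def Alb {V : Type*} [Fintype V] (G : SimpleGraph V) [DecidableRel G.Adj] : ℝ :=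
  (∑ u : V, ∑ v ∈ G.neighborFinset u, |(G.degree u : ℝ) - (G.degree v : ℝ)|) / 2

theorem stmt3 {V : Type*} [Fintype V] [DecidableEq V]
    (G : SimpleGraph V) [DecidableRel G.Adj] (hG : G.Connected)
    (p : ℝ) (hp : 1 ≤ p) :
    ((G.edgeFinset.card : ℝ) + p * Alb G) ^ (1 / p) - (G.edgeFinset.card : ℝ) ^ (1 / p)
      ≤ Ap G p := by
  have hp0 : 0 < p := lt_of_lt_of_le one_pos hp
  have hip : 0 ≤ 1 / p := by positivity
  set s : Finset (Σ _ : V, V) := Finset.univ.sigma (fun u => G.neighborFinset u) with hs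
  set a : (Σ _ : V, V) → ℝ := fun x => |(G.degree x.1 : ℝ) - (G.degree x.2 : ℝ)| with ha
  have ha0 : ∀ x ∈ s, (0:ℝ) ≤ a x := fun x _ => abs_nonneg _
  -- rewrite everything as sums over s
  have hAp : Ap G p = ((∑ x ∈ s, a x ^ p) / 2) ^ (1 / p) := by
    rw [Ap, Finset.sum_sigma]
  have hAlb : Alb G = (∑ x ∈ s, a x) / 2 := by
    rw [Alb, Finset.sum_sigma]
  have hcard : ((G.edgeFinset.card : ℝ)) = (∑ x ∈ s, (1:ℝ)) / 2 := by
    have := G.sum_degrees_eq_twice_card_edges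
    rw [Finset.sum_const, hs, Finset.card_sigma]
    simp only [SimpleGraph.card_neighborFinset_eq_degree]
    push_cast [this]
    ring
  rw [hAp, hAlb, hcard]
  rw [sub_le_iff_le_add]
  have key : ((∑ x ∈ s, (1:ℝ)) + p * (∑ x ∈ s, a x)) ^ (1/p)
      ≤ (∑ x ∈ s, a x ^ p) ^ (1/p) + (∑ x ∈ s, (1:ℝ)) ^ (1/p) := by
    have h1 : (∑ x ∈ s, (1:ℝ)) + p * (∑ x ∈ s, a x) = ∑ x ∈ s, (1 + p * a x) := by
      rw [Finset.sum_add_distrib, Finset.mul_sum]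
    have h2 : ∑ x ∈ s, (1 + p * a x) ≤ ∑ x ∈ s, (1 + a x) ^ p := by
      apply Finset.sum_le_sum
      intro x hx
      exact one_add_mul_self_le_rpow_one_add (le_trans (by norm_num) (ha0 x hx)) hp
    have h3 : ((∑ x ∈ s, (1:ℝ)) + p * (∑ x ∈ s, a x)) ^ (1/p)
        ≤ (∑ x ∈ s, (1 + a x) ^ p) ^ (1/p) := by
      apply Real.rpow_le_rpow _ (h1 ▸ h2) hip
      rw [h1]
      apply Finset.sum_nonneg
      intro x hx
      have := ha0 x hx
      positivity
    refine h3.trans ?_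
    have := Real.Lp_add_le_of_nonneg (s := s) (f := fun _ => (1:ℝ)) (g := a) hp (fun _ _ => zero_le_one) ha0
    simp only [Real.one_rpow] at this
    linarith
  have h2p : (0:ℝ) < (2:ℝ) ^ (1/p) := Real.rpow_pos_of_pos two_pos _
  have hS1 : (0:ℝ) ≤ ∑ x ∈ s, (1:ℝ) := Finset.sum_nonneg fun _ _ => zero_le_one
  have hSa : (0:ℝ) ≤ ∑ x ∈ s, a x := Finset.sum_nonneg ha0
  have hSap : (0:ℝ) ≤ ∑ x ∈ s, a x ^ p := Finset.sum_nonneg fun x hx => Real.rpow_nonneg (ha0 x hx) p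
  have e1 : (∑ x ∈ s, (1:ℝ)) / 2 + p * ((∑ x ∈ s, a x) / 2)
      = ((∑ x ∈ s, (1:ℝ)) + p * (∑ x ∈ s, a x)) / 2 := by ring
  rw [e1, Real.div_rpow (by positivity) (by norm_num),
    Real.div_rpow hSap (by norm_num), Real.div_rpow hS1 (by norm_num),
    ← add_div, div_le_div_iff_of_pos_right h2p]
  exact key
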